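/- Suppose 1 ≤ i ≤ j ≤ n−1 and R_i + R_{i+1} = R_j + R_{j+1}. Then R_i + α_i = R_{i+1} + α_{i+1} = ⋯ = R_j + α_j and −R_{i+1} + α_i = −R_{i+2} + α_{i+1} = ⋯ = −R_{j+1} + α_j. -/

import Mathlib

/-!
Combinatorial setting abstracting a good BONG over a dyadic local field.
`R : ℕ → ℤ` are the orders `R_i = ord a_i` (indices `1,…,n` used),
`d : ℕ → EReal` are the values `d_j = d(-a_j a_{j+1}) ∈ ℕ ∪ {∞}`
(the allowed values are encoded in condition (G3) below).
-/

/-- The term `(R_{i+1} - R_i)/2 + e` appearing in the definition of `α_i`. -/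
noncomputable def halfTerm (e : ℤ) (R : ℕ → ℤ) (i : ℕ) : EReal :=
  (((R (i + 1) - R i : ℝ) / 2 + (e : ℝ) : ℝ) : EReal)

/-- The set whose minimum defines `α_i`. -/
noncomputable def alphaSet (e : ℤ) (n : ℕ) (R : ℕ → ℤ) (d : ℕ → EReal) (i : ℕ) :
    Set EReal :=
  {halfTerm e R i}
    ∪ {x | ∃ j, 1 ≤ j ∧ j ≤ i ∧ x = ((R (i + 1) - R j : ℝ) : EReal) + d j}
    ∪ {x | ∃ j, i ≤ j ∧ j + 1 ≤ n ∧ x = ((R (j + 1) - R i : ℝ) : EReal) + d j}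

/-- The invariant `α_i = α_i(L)`, for `1 ≤ i ≤ n - 1`. -/
noncomputable def alpha (e : ℤ) (n : ℕ) (R : ℕ → ℤ) (d : ℕ → EReal) (i : ℕ) : EReal :=
  sInf (alphaSet e n R d i)

/-- `α'_m(k,l)`: the `α`-invariant of the truncated data `R_k,…,R_l`, `d_k,…,d_{l-1}`. -/
noncomputable def alphaT (e : ℤ) (R : ℕ → ℤ) (d : ℕ → EReal) (k l m : ℕ) : EReal :=
  alpha e (l - k + 1) (fun j => R (k + j - 1)) (fun j => d (k + j - 1)) m

/-- Conditions (G1)-(G4) on the data `(e, n, R, d)`, abstracting a good BONG. -/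
structure GoodBONG (e : ℤ) (n : ℕ) (R : ℕ → ℤ) (d : ℕ → EReal) : Prop where
  he : 1 ≤ e
  hn : 2 ≤ n
  g1 : ∀ i, 1 ≤ i → i + 2 ≤ n → R i ≤ R (i + 2)
  g2a : ∀ j, 1 ≤ j → j + 1 ≤ n → 0 ≤ R (j + 1) - R j + 2 * e
  g2b : ∀ j, 1 ≤ j → j + 1 ≤ n → 0 ≤ ((R (j + 1) - R j : ℝ) : EReal) + d j
  g3 : ∀ j, 1 ≤ j → j + 1 ≤ n →
    d j = 0 ∨ (∃ m : ℕ, Odd m ∧ (m : ℤ) ≤ 2 * e - 1 ∧ d j = ((m : ℝ) : EReal)) ∨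
      d j = (((2 * e : ℤ) : ℝ) : EReal) ∨ d j = ⊤
  g4odd : ∀ j, 1 ≤ j → j + 1 ≤ n → Odd (R (j + 1) - R j) →
    0 < R (j + 1) - R j ∧ d j = 0
  g4even : ∀ j, 1 ≤ j → j + 1 ≤ n → Even (R (j + 1) - R j) → 0 < d j

noncomputable def ERealAddIso (c : ℝ) : EReal ≃o EReal where
  toFun x := x + (c : EReal)
  invFun x := x - (c : EReal)
  left_inv _ := EReal.add_sub_cancel_right
  right_inv _ := EReal.sub_add_cancel
  map_rel_iff' := @fun _ _ => (EReal.addLECancellable_coe c).add_le_add_iff_right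

lemma sInf_image_add (c : ℝ) (S : Set EReal) :
    sInf ((fun x => x + (c : EReal)) '' S) = sInf S + (c : EReal) :=
  (map_sInf (ERealAddIso c) S).symm

lemma shiftd (a b : ℝ) (x : EReal) :
    ((a : ℝ) : EReal) + x + ((b : ℝ) : EReal) = (((a + b : ℝ)) : EReal) + x := by
  rw [add_right_comm, ← EReal.coe_add]

lemma add_coe_comm3 (a b : ℝ) (x : EReal) :
    ((a : ℝ) : EReal) + (x + ((b : ℝ) : EReal)) = (((a + b : ℝ)) : EReal) + x := by
  rw [← add_assoc, shiftd]

lemma alphaSet_shift (e : ℤ) (n : ℕ) (R : ℕ → ℤ) (d : ℕ → EReal) (k : ℕ)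
    (hk : 1 ≤ k) (hkn : k + 2 ≤ n) (hRk : R (k + 2) = R k) :
    alphaSet e n R d k
      = (fun x => x + (((R (k + 1) - R k : ℤ) : ℝ) : EReal)) '' alphaSet e n R d (k + 1) := by
  have e1 : R (k + 1 + 1) = R k := hRk
  have h2 : ((R (k + 1 + 1) : ℤ) : ℝ) = ((R k : ℤ) : ℝ) := by exact_mod_cast congrArg Int.cast e1
  ext x
  simp only [alphaSet, Set.mem_union, Set.mem_singleton_iff, Set.mem_setOf_eq, Set.mem_image]
  constructor
  · rintro ((hx | ⟨m, hm1, hmk, rfl⟩) | ⟨m, hkm, hmn, rfl⟩)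
    · refine ⟨halfTerm e R (k + 1), Or.inl (Or.inl rfl), ?_⟩
      subst hx
      unfold halfTerm
      rw [← EReal.coe_add, EReal.coe_eq_coe_iff]
      push_cast
      rw [h2]
      ring
    · refine ⟨((R (k + 1 + 1) - R m : ℝ) : EReal) + d m,
        Or.inl (Or.inr ⟨m, hm1, le_trans hmk (Nat.le_succ k), rfl⟩), ?_⟩
      show _ + _ + _ = _
      rw [shiftd]
      congr 1
      norm_cast <;> omega
    · rcases eq_or_lt_of_le hkm with rfl | hlt
      · refine ⟨((R (k + 1 + 1) - R k : ℝ) : EReal) + d k,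
          Or.inl (Or.inr ⟨k, hk, Nat.le_succ k, rfl⟩), ?_⟩
        show _ + _ + _ = _
        rw [shiftd]
        congr 1
        norm_cast <;> omega
      · have hm : k + 1 ≤ m := hlt
        refine ⟨((R (m + 1) - R (k + 1) : ℝ) : EReal) + d m,
          Or.inr ⟨m, hm, hmn, rfl⟩, ?_⟩
        show _ + _ + _ = _
        rw [shiftd]
        congr 1
        norm_cast <;> omega
  · rintro ⟨y, ((hy | ⟨m, hm1, hmk, rfl⟩) | ⟨m, hkm, hmn, rfl⟩), rfl⟩
    · subst hy
      left; left
      unfold halfTerm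
      rw [← EReal.coe_add, EReal.coe_eq_coe_iff]
      push_cast
      rw [h2]
      ring
    · rcases eq_or_lt_of_le hmk with rfl | hlt
      · right
        refine ⟨k + 1, Nat.le_succ k, hkn, ?_⟩
        show _ + _ + _ = _
        rw [shiftd]
        congr 1
        norm_cast <;> omega
      · have hm : m ≤ k := Nat.lt_succ_iff.mp hlt
        left; right
        refine ⟨m, hm1, hm, ?_⟩
        show _ + _ + _ = _
        rw [shiftd]
        congr 1
        norm_cast <;> omega
    · right
      refine ⟨m, le_trans (Nat.le_succ k) hkm, hmn, ?_⟩
      show _ + _ + _ = _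
      rw [shiftd]
      congr 1
      norm_cast <;> omega

lemma alpha_shift (e : ℤ) (n : ℕ) (R : ℕ → ℤ) (d : ℕ → EReal) (k : ℕ)
    (hk : 1 ≤ k) (hkn : k + 2 ≤ n) (hRk : R (k + 2) = R k) :
    alpha e n R d k = alpha e n R d (k + 1) + (((R (k + 1) - R k : ℤ) : ℝ) : EReal) := by
  rw [alpha, alphaSet_shift e n R d k hk hkn hRk, sInf_image_add]
  rfl

/-- if `1 ≤ i ≤ j ≤ n-1` and `R_i + R_{i+1} = R_j + R_{j+1}`, then
`R_i + α_i = ⋯ = R_j + α_j` and `-R_{i+1} + α_i = ⋯ = -R_{j+1} + α_j`. -/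
theorem stmt2 (e : ℤ) (n : ℕ) (R : ℕ → ℤ) (d : ℕ → EReal)
    (h : GoodBONG e n R d) (i j : ℕ)
    (hi : 1 ≤ i) (hij : i ≤ j) (hjn : j + 1 ≤ n)
    (hR : R i + R (i + 1) = R j + R (j + 1)) :
    ∀ k, i ≤ k → k ≤ j →
      ((R k : ℝ) : EReal) + alpha e n R d k = ((R i : ℝ) : EReal) + alpha e n R d i ∧
      (((-R (k + 1) : ℤ) : ℝ) : EReal) + alpha e n R d k =
        (((-R (i + 1) : ℤ) : ℝ) : EReal) + alpha e n R d i := by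
  have hstep : ∀ l, i ≤ l → l + 1 ≤ j → R l + R (l + 1) ≤ R (l + 1) + R (l + 1 + 1) := by
    intro l hl hl1
    have h1 := h.g1 l (le_trans hi hl) (by omega)
    have e1 : R (l + 1 + 1) = R (l + 2) := rfl
    omega
  have hchain : ∀ b, i ≤ b → b ≤ j → R i + R (i + 1) ≤ R b + R (b + 1) := by
    intro b hb
    induction b, hb using Nat.le_induction with
    | base => intro _; exact le_refl _
    | succ l hl ih =>
      intro hlj
      exact le_trans (ih (by omega)) (hstep l hl hlj)
  have hchain2 : ∀ b, i ≤ b → b ≤ j → R b + R (b + 1) ≤ R j + R (j + 1) := by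
    intro b hb hbj
    have key : ∀ m, b ≤ m → m ≤ j → R b + R (b + 1) ≤ R m + R (m + 1) := by
      intro m hm
      induction m, hm using Nat.le_induction with
      | base => intro _; exact le_refl _
      | succ l hl ih =>
        intro hlj
        exact le_trans (ih (by omega)) (hstep l (le_trans hb hl) hlj)
    exact key j hbj (le_refl j)
  have hconstR : ∀ k, i ≤ k → k + 1 ≤ j → R (k + 2) = R k := by
    intro k hk hk1
    have h1 := hchain k hk (by omega)
    have h2 := hchain2 k hk (by omega)
    have h3 := hchain (k + 1) (by omega) hk1
    have h4 := hchain2 (k + 1) (by omega) hk1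
    have e1 : R (k + 1 + 1) = R (k + 2) := rfl
    omega
  intro k hk
  induction k, hk using Nat.le_induction with
  | base => intro _; exact ⟨rfl, rfl⟩
  | succ l hl ih =>
    intro hlj
    have hlj' : l ≤ j := by omega
    obtain ⟨ih1, ih2⟩ := ih hlj'
    have hRk : R (l + 2) = R l := hconstR l hl hlj
    have e1 : R (l + 1 + 1) = R l := hRk
    have halpha := alpha_shift e n R d l (le_trans hi hl) (by omega) hRk
    constructor
    · rw [← ih1, halpha, add_coe_comm3]
      congr 1
      norm_cast <;> omega
    · rw [← ih2, halpha, add_coe_comm3]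
      congr 1
      norm_cast <;> omega
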